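/- Let n ≥ 1 and let A : V → End(V) be linear with Ω(A(X)Y,Z) totally symmetric and A(X)∘A(Y) = 0 for all X,Y, and let ψ^A(x) = x − ½·A(x)x. Then ψ^A carries the flat connection ∇⁰ to ∇^A = ∇⁰ + A: for all x ∈ V and X,Y ∈ V, the second Fréchet derivative satisfies D²ψ^A(x)(X,Y) + A(Dψ^A(x)X)(Dψ^A(x)Y) = 0. In particular, for every x, X, the curve γ(s) = ψ^A(x + sX) satisfies the geodesic equation of ∇^A: γ''(s) + A(γ'(s))(γ'(s)) = 0 for all s ∈ ℝ. -/

import Mathlib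

set_option synthInstance.maxHeartbeats 1000000
set_option maxHeartbeats 1000000
set_option linter.unusedVariables false


noncomputable section

/-- The standard symplectic form on `ℝ^{2n}`. -/
def Omega (n : ℕ) (x y : Fin (2*n) → ℝ) : ℝ :=
  ∑ i : Fin n, (x ⟨i.1, by have := i.isLt; omega⟩ * y ⟨n + i.1, by have := i.isLt; omega⟩
    - x ⟨n + i.1, by have := i.isLt; omega⟩ * y ⟨i.1, by have := i.isLt; omega⟩)

/-- The map `ψ^A(x) = x − ½·A(x)x` associated to a linear `A : V → End(V)`. -/
def psiMap (n : ℕ)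
    (A : (Fin (2*n) → ℝ) →ₗ[ℝ] (Fin (2*n) → ℝ) →ₗ[ℝ] (Fin (2*n) → ℝ))
    (x : Fin (2*n) → ℝ) : Fin (2*n) → ℝ :=
  x - (1/2 : ℝ) • A x x

lemma omega_single_hi (n : ℕ) (u : Fin (2*n) → ℝ) (k : ℕ) (hk : k < n) :
    Omega n u (Pi.single ⟨n + k, by omega⟩ 1) = u ⟨k, by omega⟩ := by
  unfold Omega
  rw [Fintype.sum_eq_single ⟨k, hk⟩]
  · simp [Pi.single_apply, Fin.ext_iff]
    omega
  · intro i hi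
    have h1 : (⟨(i:ℕ), by have := i.isLt; omega⟩ : Fin (2*n)) ≠ ⟨n+k, by omega⟩ := by
      simp [Fin.ext_iff]; have := i.isLt; omega
    have h2 : (⟨n+(i:ℕ), by have := i.isLt; omega⟩ : Fin (2*n)) ≠ ⟨n+k, by omega⟩ := by
      simp [Fin.ext_iff]
      intro h; exact hi (Fin.ext h)
    simp [Pi.single_apply, h1, h2]

lemma omega_single_lo (n : ℕ) (u : Fin (2*n) → ℝ) (k : ℕ) (hk : k < n) :
    Omega n u (Pi.single ⟨k, by omega⟩ 1) = -u ⟨n + k, by omega⟩ := by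
  unfold Omega
  rw [Fintype.sum_eq_single ⟨k, hk⟩]
  · simp [Pi.single_apply, Fin.ext_iff]
    omega
  · intro i hi
    have h1 : ¬ ((i:ℕ) = k) := fun h => hi (Fin.ext h)
    simp [Pi.single_apply, Fin.ext_iff, h1]
    have := i.isLt; omega

lemma omega_nondeg (n : ℕ) (u : Fin (2*n) → ℝ) (h : ∀ Z, Omega n u Z = 0) : u = 0 := by
  funext j
  rcases lt_or_ge (j : ℕ) n with hj | hj
  · have := h (Pi.single ⟨n + j, by omega⟩ 1)
    rw [omega_single_hi n u j hj] at this
    simpa using this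
  · have hj2 : (j : ℕ) - n < n := by have := j.isLt; omega
    have := h (Pi.single ⟨(j:ℕ) - n, by omega⟩ 1)
    rw [omega_single_lo n u _ hj2] at this
    have hjj : (⟨n + ((j:ℕ) - n), by omega⟩ : Fin (2*n)) = j := by
      simp [Fin.ext_iff]; omega
    rw [hjj] at this
    simp only [Pi.zero_apply]
    linarith

lemma omega_sub_left (n : ℕ) (u v Z : Fin (2*n) → ℝ) :
    Omega n (u - v) Z = Omega n u Z - Omega n v Z := by
  unfold Omega
  rw [← Finset.sum_sub_distrib]
  congr 1; funext i; simp [sub_mul]; ring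

section main
variable {n : ℕ}
  (A : (Fin (2*n) → ℝ) →ₗ[ℝ] (Fin (2*n) → ℝ) →ₗ[ℝ] (Fin (2*n) → ℝ))

lemma Asym (hsym₁ : ∀ X Y Z, Omega n (A X Y) Z = Omega n (A Y X) Z)
    (X Y : Fin (2*n) → ℝ) : A X Y = A Y X := by
  have := omega_nondeg n (A X Y - A Y X) (fun Z => by
    rw [omega_sub_left, hsym₁ X Y Z, sub_self])
  have h := sub_eq_zero.mp this
  exact h

/-- `A` as a continuous bilinear map. -/
def Bc : (Fin (2*n) → ℝ) →L[ℝ] (Fin (2*n) → ℝ) →L[ℝ] (Fin (2*n) → ℝ) :=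
  LinearMap.toContinuousLinearMap
  { toFun := fun x => LinearMap.toContinuousLinearMap (A x)
    map_add' := fun x y => by ext z; simp
    map_smul' := fun c x => by ext z; simp }

@[simp] lemma Bc_apply (x y : Fin (2*n) → ℝ) : Bc A x y = A x y := by
  simp [Bc]

def psiMap' (x : Fin (2*n) → ℝ) : Fin (2*n) → ℝ := x - (1/2 : ℝ) • A x x

/-- total derivative of ψ. -/
def Dpsi (x : Fin (2*n) → ℝ) : (Fin (2*n) → ℝ) →L[ℝ] (Fin (2*n) → ℝ) :=
  ContinuousLinearMap.id ℝ _ - ((1/2 : ℝ) • (Bc A + (Bc A).flip)) x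

lemma psi_hasFDerivAt (x : Fin (2*n) → ℝ) :
    HasFDerivAt (psiMap' A) (Dpsi A x) x := by
  have hp : HasFDerivAt (fun y : Fin (2*n) → ℝ => (y, y))
      ((ContinuousLinearMap.id ℝ _).prod (ContinuousLinearMap.id ℝ _)) x :=
    (hasFDerivAt_id x).prodMk (hasFDerivAt_id x)
  have hb : HasFDerivAt (fun y : Fin (2*n) → ℝ => Bc A y y)
      (((Bc A).isBoundedBilinearMap.deriv (x, x)).comp
        ((ContinuousLinearMap.id ℝ _).prod (ContinuousLinearMap.id ℝ _))) x :=
    HasFDerivAt.comp (f := fun y : Fin (2*n) → ℝ => (y, y))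
      (g := fun p : (Fin (2*n) → ℝ) × (Fin (2*n) → ℝ) => Bc A p.1 p.2) x
      ((Bc A).isBoundedBilinearMap.hasFDerivAt (x, x)) hp
  have hq : HasFDerivAt (fun y => Bc A y y) (Bc A x + (Bc A).flip x) x := by
    refine hb.congr_fderiv ?_
    ext y; simp [IsBoundedBilinearMap.deriv]
  have := (hasFDerivAt_id x).sub (hq.const_smul (1/2 : ℝ))
  exact this

lemma psi_fderiv (x : Fin (2*n) → ℝ) :
    fderiv ℝ (psiMap' A) x = Dpsi A x := (psi_hasFDerivAt A x).fderiv

lemma Dpsi_apply (hsym₁ : ∀ X Y Z, Omega n (A X Y) Z = Omega n (A Y X) Z)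
    (x X : Fin (2*n) → ℝ) : Dpsi A x X = X - A x X := by
  simp [Dpsi, Asym A hsym₁ X x]
  rw [← smul_add, ← two_smul ℝ, smul_smul]
  norm_num

lemma fderiv_Dpsi (x : Fin (2*n) → ℝ) :
    fderiv ℝ (fun y => Dpsi A y) x = -((1/2 : ℝ) • (Bc A + (Bc A).flip)) := by
  have h : HasFDerivAt (fun y => Dpsi A y) (-((1/2 : ℝ) • (Bc A + (Bc A).flip))) x := by
    have := (hasFDerivAt_const (ContinuousLinearMap.id ℝ (Fin (2*n) → ℝ)) x).sub
      (((1/2 : ℝ) • (Bc A + (Bc A).flip)).hasFDerivAt (x := x))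
    exact this.congr_fderiv (by simp)
  exact h.fderiv

end main


/-- `ψ^A` carries the flat connection `∇⁰` to `∇^A = ∇⁰ + A`:
`D²ψ^A(x)(X,Y) + A(Dψ^A(x)X)(Dψ^A(x)Y) = 0`; in particular `γ(s) = ψ^A(x+sX)` solves the
geodesic equation `γ'' + A(γ')(γ') = 0` of `∇^A`. -/
theorem psiA_maps_flat_to_nablaA (n : ℕ) (hn : 1 ≤ n)
    (A : (Fin (2*n) → ℝ) →ₗ[ℝ] (Fin (2*n) → ℝ) →ₗ[ℝ] (Fin (2*n) → ℝ))
    (hsym₁ : ∀ X Y Z, Omega n (A X Y) Z = Omega n (A Y X) Z)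
    (hsym₂ : ∀ X Y Z, Omega n (A X Y) Z = Omega n (A X Z) Y)
    (hnil : ∀ X Y Z, A X (A Y Z) = 0) :
    (∀ x X Y, iteratedFDeriv ℝ 2 (psiMap n A) x ![X, Y]
        + A (fderiv ℝ (psiMap n A) x X) (fderiv ℝ (psiMap n A) x Y) = 0) ∧
    (∀ (x X : Fin (2*n) → ℝ) (s : ℝ),
      deriv (deriv (fun s' : ℝ => psiMap n A (x + s' • X))) s
        + A (deriv (fun s' : ℝ => psiMap n A (x + s' • X)) s)
            (deriv (fun s' : ℝ => psiMap n A (x + s' • X)) s) = 0) := by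
  have hpsi : psiMap n A = psiMap' A := rfl
  -- A applied to an `A`-image on the left vanishes
  have hnil' : ∀ X Y Z, A (A X Y) Z = 0 := fun X Y Z => by
    rw [Asym A hsym₁]; exact hnil Z X Y
  have hfd : ∀ x, fderiv ℝ (psiMap n A) x = Dpsi A x := fun x => by
    rw [hpsi]; exact psi_fderiv A x
  constructor
  · intro x X Y
    have h2 : iteratedFDeriv ℝ 2 (psiMap n A) x ![X, Y] = - A X Y := by
      rw [iteratedFDeriv_two_apply]
      have : fderiv ℝ (psiMap n A) = fun y => Dpsi A y := funext hfd
      rw [this]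
      rw [fderiv_Dpsi A x]
      show -(((1/2 : ℝ) • (Bc A + (Bc A).flip)) (![X,Y] 0)) (![X,Y] 1) = _
      simp only [Matrix.cons_val_zero, Matrix.cons_val_one, Matrix.head_cons]
      show -((1/2 : ℝ) • (Bc A X Y + Bc A Y X)) = _
      rw [Bc_apply, Bc_apply, Asym A hsym₁ Y X, ← two_smul ℝ, smul_smul]
      norm_num
    rw [h2, hfd, Dpsi_apply A hsym₁ x X, Dpsi_apply A hsym₁ x Y]
    simp only [map_sub, LinearMap.sub_apply]
    rw [hnil, hnil', hnil']
    abel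
  · intro x X s
    set c1 : Fin (2*n) → ℝ := X - A x X with hc1
    set c2 : Fin (2*n) → ℝ := A X X with hc2
    have hAxX : A X x = A x X := Asym A hsym₁ X x
    have hgam : (fun s' : ℝ => psiMap n A (x + s' • X))
        = fun s' : ℝ => (x - (1/2 : ℝ) • A x x) + s' • c1 + (s' * s') • ((-(1/2) : ℝ) • c2) := by
      funext t
      simp only [psiMap, hc1, hc2, map_add, map_smul, LinearMap.add_apply,
        LinearMap.smul_apply, hAxX, smul_add, smul_sub, smul_smul]
      module
    have hd1 : ∀ t : ℝ, HasDerivAt (fun s' : ℝ => psiMap n A (x + s' • X))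
        (c1 + (2 * t) • ((-(1/2) : ℝ) • c2)) t := by
      intro t
      rw [hgam]
      have h1 : HasDerivAt (fun s' : ℝ => s' • c1) c1 t := by
        simpa using (hasDerivAt_id t).smul_const c1
      have h2 : HasDerivAt (fun s' : ℝ => (s' * s') • ((-(1/2) : ℝ) • c2))
          ((2 * t) • ((-(1/2) : ℝ) • c2)) t := by
        have := ((hasDerivAt_id t).mul (hasDerivAt_id t)).smul_const ((-(1/2) : ℝ) • c2)
        refine this.congr_deriv ?_
        congr 1; simp; ring
      exact (((hasDerivAt_const t (x - (1/2 : ℝ) • A x x)).add h1).add h2).congr_deriv (by simp)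
    have hderiv1 : deriv (fun s' : ℝ => psiMap n A (x + s' • X))
        = fun t : ℝ => c1 + (2 * t) • ((-(1/2) : ℝ) • c2) := funext fun t => (hd1 t).deriv
    have hd2 : HasDerivAt (fun t : ℝ => c1 + (2 * t) • ((-(1/2) : ℝ) • c2))
        ((2 : ℝ) • ((-(1/2) : ℝ) • c2)) s := by
      have := ((hasDerivAt_id s).const_mul (2 : ℝ)).smul_const ((-(1/2) : ℝ) • c2)
      exact ((hasDerivAt_const s c1).add this).congr_deriv (by simp)
    rw [hderiv1]
    rw [hd2.deriv]
    have he : (2 : ℝ) • ((-(1/2) : ℝ) • c2) = -c2 := by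
      rw [smul_smul]; norm_num
    rw [he]
    have hexp : A (c1 + (2 * s) • ((-(1/2) : ℝ) • c2)) (c1 + (2 * s) • ((-(1/2) : ℝ) • c2)) = c2 := by
      simp only [map_add, map_smul, LinearMap.add_apply, LinearMap.smul_apply, hc1, hc2,
        map_sub, LinearMap.sub_apply]
      rw [hnil, hnil', hnil']
      simp only [hnil, hnil']
      simp
    rw [hexp]
    abel
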